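/- Let $A \in \mathbb{C}^{n\times n}$, $B \in \mathbb{C}^{n\times m}$, $C \in \mathbb{C}^{p\times n}$, $\tau > 0$. Let $\hat{A} = \hat{R}\hat{\Lambda}\hat{R}^{-1}$ with $\hat{R} \in \mathbb{C}^{r\times r}$ invertible and $\hat{\Lambda} = \mathrm{diag}(\hat{\lambda}_1,\ldots,\hat{\lambda}_r)$, let $\hat{B} \in \mathbb{C}^{r\times m}$, $\hat{C} \in \mathbb{C}^{p\times r}$, and suppose $-\hat{\lambda}_i I - A^T$ and $-\hat{\lambda}_i I - \hat{A}^T$ are invertible for every $i$. Set $C_\tau = C\exp(\tau A)$, $\hat{C}_\tau = \hat{C}\exp(\tau\hat{A})$, define $H_{\mathcal{T}}(s) = \begin{bmatrix}C\\ -C_\tau\end{bmatrix}(sI-A)^{-1}B$ and $\hat{H}_{\mathcal{T}}(s) = \begin{bmatrix}\hat{C}\\ -\hat{C}_\tau\end{bmatrix}(sI-\hat{A})^{-1}\hat{B}$, let $\hat{l}_i = \hat{C}\hat{R}e_i$ (the $i$-th column of $\hat{C}\hat{R}$), and set $\tilde{l}_i = \begin{bmatrix}\hat{l}_i \\ e^{\hat{\lambda}_i\tau}\hat{l}_i\end{bmatrix}$.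 Let $\bar{Q}_\tau$ satisfy $A^T\bar{Q}_\tau + \bar{Q}_\tau\hat{A} + C^T\hat{C} - C_\tau^T\hat{C}_\tau = 0$ and $\hat{Q}_\tau$ satisfy $\hat{A}^T\hat{Q}_\tau + \hat{Q}_\tau\hat{A} + \hat{C}^T\hat{C} - \hat{C}_\tau^T\hat{C}_\tau = 0$. Then $B^T\bar{Q}_\tau = \hat{B}^T\hat{Q}_\tau$ if and only if $\tilde{l}_i^T H_{\mathcal{T}}(-\hat{\lambda}_i) = \tilde{l}_i^T \hat{H}_{\mathcal{T}}(-\hat{\lambda}_i)$ for every $i = 1,\ldots,r$. -/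

import Mathlib

open Matrix NormedSpace

set_option maxHeartbeats 1000000

/-- Auxiliary: the transformed Sylvester equation obtained by multiplying on the right
by the eigenvector matrix. -/
lemma syl_transform {N r p : ℕ}
    (A : Matrix (Fin N) (Fin N) ℂ) (Q : Matrix (Fin N) (Fin r) ℂ)
    (Ahat Rhat : Matrix (Fin r) (Fin r) ℂ) (lam : Fin r → ℂ)
    (Ct : Matrix (Fin p) (Fin N) ℂ) (Ch Cth : Matrix (Fin p) (Fin r) ℂ)
    (hAR : Ahat * Rhat = Rhat * Matrix.diagonal lam)
    (h : Aᵀ * Q + Q * Ahat + Ctᵀ * Ch - Ctᵀ * Cth = 0) :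
    Aᵀ * (Q * Rhat) + (Q * Rhat) * Matrix.diagonal lam
      + (Ctᵀ * (Ch * Rhat) - Ctᵀ * (Cth * Rhat)) = 0 := by
  have h0 := congrArg (fun M => M * Rhat) h
  simp only [Matrix.add_mul, Matrix.sub_mul, Matrix.zero_mul] at h0
  rw [Matrix.mul_assoc Aᵀ Q Rhat, Matrix.mul_assoc Q Ahat Rhat, hAR,
    ← Matrix.mul_assoc Q Rhat (Matrix.diagonal lam),
    Matrix.mul_assoc Ctᵀ Ch Rhat, Matrix.mul_assoc Ctᵀ Cth Rhat, add_sub_assoc] at h0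
  exact h0

/-- Auxiliary lemma: column-wise identity linking the transformed Sylvester equation to
the tangential value of the transfer function. -/
lemma side_eq {N p r m : ℕ}
    (A : Matrix (Fin N) (Fin N) ℂ) (B : Matrix (Fin N) (Fin m) ℂ)
    (C Ctau : Matrix (Fin p) (Fin N) ℂ)
    (G Gt : Matrix (Fin p) (Fin r) ℂ)
    (lam : Fin r → ℂ) (c : ℂ)
    (P : Matrix (Fin N) (Fin r) ℂ)
    (i : Fin r)
    (hu : IsUnit ((-lam i) • (1 : Matrix (Fin N) (Fin N) ℂ) - Aᵀ))
    (hSyl : Aᵀ * P + P * Matrix.diagonal lam + (Cᵀ * G - Ctauᵀ * Gt) = 0)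
    (hGt : ∀ k, Gt k i = c * G k i) :
    Matrix.vecMul (Sum.elim (fun k => G k i) (fun k => c * G k i))
      (Matrix.fromRows C (-Ctau) * ((-lam i) • (1 : Matrix (Fin N) (Fin N) ℂ) - A)⁻¹ * B)
      = (Bᵀ * P) *ᵥ Pi.single i 1 := by
  have hudet : IsUnit ((-lam i) • (1 : Matrix (Fin N) (Fin N) ℂ) - Aᵀ).det :=
    (Matrix.isUnit_iff_isUnit_det _).mp hu
  have hGe : G *ᵥ Pi.single i 1 = fun k => G k i := by
    ext k; simp [Matrix.mulVec, dotProduct, Pi.single_apply]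
  have hGte : Gt *ᵥ Pi.single i 1 = fun k => c * G k i := by
    ext k; simp [Matrix.mulVec, dotProduct, Pi.single_apply, hGt k]
  -- the tangential direction vector hitting the numerator
  have hW : (Cᵀ * G) *ᵥ Pi.single i 1 - (Ctauᵀ * Gt) *ᵥ Pi.single i 1
      = Cᵀ *ᵥ (fun k => G k i) - Ctauᵀ *ᵥ (fun k => c * G k i) := by
    rw [← Matrix.mulVec_mulVec, ← Matrix.mulVec_mulVec, hGe, hGte]
  -- from the Sylvester equation: ((-λ)•1 - Aᵀ) *ᵥ x = w
  have hMx : ((-lam i) • (1 : Matrix (Fin N) (Fin N) ℂ) - Aᵀ) *ᵥ (P *ᵥ Pi.single i 1)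
      = Cᵀ *ᵥ (fun k => G k i) - Ctauᵀ *ᵥ (fun k => c * G k i) := by
    have h0 := congrArg (fun M => M *ᵥ Pi.single i 1) hSyl
    simp only [Matrix.add_mulVec, Matrix.sub_mulVec, Matrix.zero_mulVec] at h0
    have hA : (Aᵀ * P) *ᵥ Pi.single i 1 = Aᵀ *ᵥ (P *ᵥ Pi.single i 1) :=
      (Matrix.mulVec_mulVec _ _ _).symm
    have hsingle : (Pi.single i (lam i * 1) : Fin r → ℂ)
        = lam i • (Pi.single i 1 : Fin r → ℂ) := by
      ext k
      by_cases hk : k = i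
      · subst hk; simp
      · simp [Pi.single_apply, hk]
    have hD : (P * Matrix.diagonal lam) *ᵥ Pi.single i 1
        = lam i • (P *ᵥ Pi.single i 1) := by
      rw [← Matrix.mulVec_mulVec, Matrix.diagonal_mulVec_single, hsingle, Matrix.mulVec_smul]
    rw [hA, hD, hW] at h0
    have h2 := eq_neg_of_add_eq_zero_right h0
    rw [Matrix.sub_mulVec, Matrix.smul_mulVec, Matrix.one_mulVec, h2]
    ext k
    simp only [Pi.sub_apply, Pi.neg_apply, Pi.add_apply, Pi.smul_apply, smul_eq_mul]
    ring
  have hxw : (P *ᵥ Pi.single i 1)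
      = ((-lam i) • (1 : Matrix (Fin N) (Fin N) ℂ) - Aᵀ)⁻¹ *ᵥ
        (Cᵀ *ᵥ (fun k => G k i) - Ctauᵀ *ᵥ (fun k => c * G k i)) := by
    rw [← hMx, Matrix.mulVec_mulVec, Matrix.nonsing_inv_mul _ hudet, Matrix.one_mulVec]
  -- the numerator transposed against the direction vector
  have hFl : (Matrix.fromRows C (-Ctau))ᵀ *ᵥ (Sum.elim (fun k => G k i) (fun k => c * G k i))
      = Cᵀ *ᵥ (fun k => G k i) - Ctauᵀ *ᵥ (fun k => c * G k i) := by
    rw [Matrix.transpose_fromRows, Matrix.fromCols_mulVec_sumElim,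
      Matrix.transpose_neg, Matrix.neg_mulVec, sub_eq_add_neg]
  have hMT : ((-lam i) • (1 : Matrix (Fin N) (Fin N) ℂ) - A)ᵀ
      = (-lam i) • (1 : Matrix (Fin N) (Fin N) ℂ) - Aᵀ := by
    rw [Matrix.transpose_sub, Matrix.transpose_smul, Matrix.transpose_one]
  rw [← Matrix.mulVec_transpose, Matrix.transpose_mul, Matrix.transpose_mul,
    Matrix.transpose_nonsing_inv, hMT, ← Matrix.mulVec_mulVec, ← Matrix.mulVec_mulVec,
    hFl, ← hxw, Matrix.mulVec_mulVec]

/-- **Theorem 3, part 3.** For a reduced-order model with simple poles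
(`Â = R̂ Λ̂ R̂⁻¹` diagonalizable), the gramian-based optimality condition (b2)
`Bᵀ Q̄τ = B̂ᵀ Q̂τ` of time-limited `H₂`-optimal model order reduction is equivalent to the
left tangential interpolation conditions
`l̃ᵢᵀ H_T(−λ̂ᵢ) = l̃ᵢᵀ Ĥ_T(−λ̂ᵢ)` for all `i`. -/
theorem time_limited_b2_iff_left_tangential_interpolation
    {n m p r : ℕ}
    (A : Matrix (Fin n) (Fin n) ℂ)
    (B : Matrix (Fin n) (Fin m) ℂ)
    (C : Matrix (Fin p) (Fin n) ℂ)
    (τ : ℝ) (hτ : 0 < τ)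
    (Rhat : Matrix (Fin r) (Fin r) ℂ) (hRhat : IsUnit Rhat)
    (lamhat : Fin r → ℂ)
    (Ahat : Matrix (Fin r) (Fin r) ℂ)
    (hAhat : Ahat = Rhat * Matrix.diagonal lamhat * Rhat⁻¹)
    (Bhat : Matrix (Fin r) (Fin m) ℂ)
    (Chat : Matrix (Fin p) (Fin r) ℂ)
    (hinvA : ∀ i : Fin r, IsUnit ((-lamhat i) • (1 : Matrix (Fin n) (Fin n) ℂ) - Aᵀ))
    (hinvAhat : ∀ i : Fin r, IsUnit ((-lamhat i) • (1 : Matrix (Fin r) (Fin r) ℂ) - Ahatᵀ))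
    (Ctau : Matrix (Fin p) (Fin n) ℂ) (hCtau : Ctau = C * exp ((τ : ℂ) • A))
    (Chattau : Matrix (Fin p) (Fin r) ℂ) (hChattau : Chattau = Chat * exp ((τ : ℂ) • Ahat))
    (HT : ℂ → Matrix (Fin p ⊕ Fin p) (Fin m) ℂ)
    (hHT : ∀ s : ℂ, HT s =
      Matrix.fromRows C (-Ctau) * (s • (1 : Matrix (Fin n) (Fin n) ℂ) - A)⁻¹ * B)
    (HThat : ℂ → Matrix (Fin p ⊕ Fin p) (Fin m) ℂ)
    (hHThat : ∀ s : ℂ, HThat s =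
      Matrix.fromRows Chat (-Chattau) * (s • (1 : Matrix (Fin r) (Fin r) ℂ) - Ahat)⁻¹ * Bhat)
    (lhat : Fin r → Fin p → ℂ) (hlhat : ∀ i k, lhat i k = (Chat * Rhat) k i)
    (ltilde : Fin r → (Fin p ⊕ Fin p) → ℂ)
    (hltilde : ∀ i, ltilde i =
      Sum.elim (lhat i) (fun k => Complex.exp (lamhat i * τ) * lhat i k))
    (Qbartau : Matrix (Fin n) (Fin r) ℂ)
    (hQbartau : Aᵀ * Qbartau + Qbartau * Ahat + Cᵀ * Chat - Ctauᵀ * Chattau = 0)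
    (Qhattau : Matrix (Fin r) (Fin r) ℂ)
    (hQhattau : Ahatᵀ * Qhattau + Qhattau * Ahat + Chatᵀ * Chat - Chattauᵀ * Chattau = 0) :
    Bᵀ * Qbartau = Bhatᵀ * Qhattau ↔
      ∀ i : Fin r,
        Matrix.vecMul (ltilde i) (HT (-lamhat i)) = Matrix.vecMul (ltilde i) (HThat (-lamhat i)) := by
  have hdet : IsUnit Rhat.det := (Matrix.isUnit_iff_isUnit_det _).mp hRhat
  have hRinv : Rhat⁻¹ * Rhat = 1 := Matrix.nonsing_inv_mul _ hdet
  have hRinv' : Rhat * Rhat⁻¹ = 1 := Matrix.mul_nonsing_inv _ hdet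
  have hAR : Ahat * Rhat = Rhat * Matrix.diagonal lamhat := by
    rw [hAhat, Matrix.mul_assoc, hRinv, Matrix.mul_one]
  -- matrix exponential of τ • Ahat
  have hexp : exp ((τ : ℂ) • Ahat)
      = Rhat * Matrix.diagonal (fun i => Complex.exp ((τ : ℂ) * lamhat i)) * Rhat⁻¹ := by
    have hd : Matrix.diagonal (fun i => (τ : ℂ) * lamhat i)
        = (τ : ℂ) • Matrix.diagonal lamhat := by
      ext j k
      by_cases hjk : j = k
      · subst hjk; simp [Matrix.diagonal_apply]
      · simp [Matrix.diagonal_apply_ne _ hjk]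
    have hsm : (τ : ℂ) • Ahat
        = Rhat * Matrix.diagonal (fun i => (τ : ℂ) * lamhat i) * Rhat⁻¹ := by
      rw [hAhat, hd, Matrix.mul_smul, Matrix.smul_mul]
    rw [hsm, Matrix.exp_conj Rhat _ hRhat, Matrix.exp_diagonal]
    have hpe : (exp (fun i => (τ : ℂ) * lamhat i) : Fin r → ℂ)
        = fun i => Complex.exp ((τ : ℂ) * lamhat i) := by
      ext k
      rw [Pi.coe_exp, Complex.exp_eq_exp_ℂ]
    rw [hpe]
  have hER : exp ((τ : ℂ) • Ahat) * Rhat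
      = Rhat * Matrix.diagonal (fun i => Complex.exp ((τ : ℂ) * lamhat i)) := by
    rw [hexp, Matrix.mul_assoc, hRinv, Matrix.mul_one]
  have hGt : Chattau * Rhat
      = (Chat * Rhat) * Matrix.diagonal (fun i => Complex.exp ((τ : ℂ) * lamhat i)) := by
    rw [hChattau, Matrix.mul_assoc, hER, ← Matrix.mul_assoc]
  have hGtcol : ∀ i k, (Chattau * Rhat) k i
      = Complex.exp (lamhat i * τ) * (Chat * Rhat) k i := by
    intro i k
    rw [hGt, Matrix.mul_diagonal, mul_comm ((τ : ℂ)) (lamhat i), mul_comm]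
  -- transformed Sylvester equations
  have hSyl1 : Aᵀ * (Qbartau * Rhat) + (Qbartau * Rhat) * Matrix.diagonal lamhat
      + (Cᵀ * (Chat * Rhat) - Ctauᵀ * (Chattau * Rhat)) = 0 := by
    have h0 := congrArg (fun M => M * Rhat) hQbartau
    simp only [Matrix.add_mul, Matrix.sub_mul, Matrix.zero_mul] at h0
    rw [Matrix.mul_assoc Aᵀ Qbartau Rhat, Matrix.mul_assoc Qbartau Ahat Rhat, hAR,
      ← Matrix.mul_assoc Qbartau Rhat (Matrix.diagonal lamhat),
      Matrix.mul_assoc Cᵀ Chat Rhat, Matrix.mul_assoc Ctauᵀ Chattau Rhat,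
      add_sub_assoc] at h0
    exact h0
  have hSyl2 : Ahatᵀ * (Qhattau * Rhat) + (Qhattau * Rhat) * Matrix.diagonal lamhat
      + (Chatᵀ * (Chat * Rhat) - Chattauᵀ * (Chattau * Rhat)) = 0 := by
    have h0 := congrArg (fun M => M * Rhat) hQhattau
    simp only [Matrix.add_mul, Matrix.sub_mul, Matrix.zero_mul] at h0
    rw [Matrix.mul_assoc Ahatᵀ Qhattau Rhat, Matrix.mul_assoc Qhattau Ahat Rhat, hAR,
      ← Matrix.mul_assoc Qhattau Rhat (Matrix.diagonal lamhat),
      Matrix.mul_assoc Chatᵀ Chat Rhat, Matrix.mul_assoc Chattauᵀ Chattau Rhat,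
      add_sub_assoc] at h0
    exact h0
  -- key columnwise identities
  have key1 : ∀ i : Fin r, Matrix.vecMul (ltilde i) (HT (-lamhat i))
      = (Bᵀ * Qbartau * Rhat) *ᵥ Pi.single i 1 := by
    intro i
    have hl : lhat i = fun k => (Chat * Rhat) k i := funext (hlhat i)
    rw [hHT, hltilde]
    simp only [hl]
    rw [Matrix.mul_assoc Bᵀ Qbartau Rhat]
    exact side_eq A B C Ctau (Chat * Rhat) (Chattau * Rhat) lamhat
      (Complex.exp (lamhat i * τ)) (Qbartau * Rhat) i (hinvA i) hSyl1 (hGtcol i)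
  have key2 : ∀ i : Fin r, Matrix.vecMul (ltilde i) (HThat (-lamhat i))
      = (Bhatᵀ * Qhattau * Rhat) *ᵥ Pi.single i 1 := by
    intro i
    have hl : lhat i = fun k => (Chat * Rhat) k i := funext (hlhat i)
    rw [hHThat, hltilde]
    simp only [hl]
    rw [Matrix.mul_assoc Bhatᵀ Qhattau Rhat]
    exact side_eq Ahat Bhat Chat Chattau (Chat * Rhat) (Chattau * Rhat) lamhat
      (Complex.exp (lamhat i * τ)) (Qhattau * Rhat) i (hinvAhat i) hSyl2 (hGtcol i)
  constructor
  · intro h i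
    rw [key1, key2, h]
  · intro h
    have hmat : Bᵀ * Qbartau * Rhat = Bhatᵀ * Qhattau * Rhat := by
      ext j i
      have hc := h i
      rw [key1, key2] at hc
      have hj := congrFun hc j
      simpa [Matrix.mulVec, dotProduct, Pi.single_apply] using hj
    calc Bᵀ * Qbartau = Bᵀ * Qbartau * (Rhat * Rhat⁻¹) := by
          rw [hRinv', Matrix.mul_one]
      _ = (Bᵀ * Qbartau * Rhat) * Rhat⁻¹ := (Matrix.mul_assoc _ _ _).symm
      _ = (Bhatᵀ * Qhattau * Rhat) * Rhat⁻¹ := by rw [hmat]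
      _ = Bhatᵀ * Qhattau * (Rhat * Rhat⁻¹) := Matrix.mul_assoc _ _ _
      _ = Bhatᵀ * Qhattau := by rw [hRinv', Matrix.mul_one]
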